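/- Fix reals α, β, γ, λ, μ > 0 and set κ = λ+α+β and β̃ = λβ(λ+β) + γ(λβ + λα + ακ). For the seven-state Markov-machine chain (defined in the context), let π be a probability vector satisfying the balance equations πQ = 0. Then the false rejection ratio satisfies FRR := (π_{(0,2)}+π_{(0,1)})/(π_{(0,2)}+π_{(0,1)}+π_{(1,2)}+π_{(1,1)}+π_{(2,2)}) = γβ(μ(λ+α)+λκ) / ((αγ+λβ)μ² + β̃μ + γλ(β+α)κ). -/

import Mathlib

/-- The generator matrix of the seven-state Markov-machine chain, with states indexed
0=(0,0), 1=(1,0), 2=(0,1), 3=(1,1), 4=(0,2), 5=(1,2), 6=(2,2). -/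
noncomputable def mmGen7 (α β γ lam μ : ℝ) : Matrix (Fin 7) (Fin 7) ℝ :=
  !![-(α + lam), α,              0,        0,  0,        0,        lam;
     β,          -(β + μ + lam), 0,        μ + lam, 0,   0,        0;
     μ,          0,              -(α + μ), α,  0,        0,        0;
     0,          0,              β,        -β, 0,        0,        0;
     μ,          0,              0,        0,  -(α + μ), α,        0;
     0,          0,              0,        μ,  β,        -(β + μ), 0;
     0,          0,              0,        0,  γ,        0,        -γ]

/-- For the seven-state Markov-machine chain with stationary distribution π,
the false rejection ratio has the stated closed form. -/
theorem frr_closed_form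
    (α β γ lam μ : ℝ) (hα : 0 < α) (hβ : 0 < β) (hγ : 0 < γ)
    (hlam : 0 < lam) (hμ : 0 < μ)
    (κ : ℝ) (hκ : κ = lam + α + β)
    (βt : ℝ) (hβt : βt = lam * β * (lam + β) + γ * (lam * β + lam * α + α * κ))
    (π : Fin 7 → ℝ) (hπnn : ∀ s, 0 ≤ π s) (hπsum : ∑ s, π s = 1)
    (hbal : ∀ j, ∑ i, π i * mmGen7 α β γ lam μ i j = 0) :
    (π 4 + π 2) / (π 4 + π 2 + π 5 + π 3 + π 6)
      = γ * β * (μ * (lam + α) + lam * κ) /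
        ((α * γ + lam * β) * μ ^ 2 + βt * μ + γ * lam * (β + α) * κ) := by
  subst hβt hκ
  have h1 := hbal 1
  have h2 := hbal 2
  have h3 := hbal 3
  have h4 := hbal 4
  have h5 := hbal 5
  have h6 := hbal 6
  simp [mmGen7, Fin.sum_univ_seven, show (6:Fin 7)=Fin.succ 5 from rfl,
    show (5:Fin 7)=Fin.succ 4 from rfl, show (5:Fin 6)=Fin.succ 4 from rfl,
    show (4:Fin 6)=Fin.succ 3 from rfl, Matrix.cons_val_succ, Matrix.cons_val_zero,
    Matrix.cons_val_one, Matrix.cons_val_two, Matrix.cons_val_three, Matrix.cons_val_four,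
    Matrix.head_cons, Matrix.tail_cons, Matrix.vecHead, Matrix.vecTail] at h1 h2 h3 h4 h5 h6
  -- multiplied-out expressions for each state probability in terms of π 6
  have hp0 : lam * π 0 = γ * π 6 := by linear_combination h6
  have hp1 : lam * (β + μ + lam) * π 1 = α * γ * π 6 := by
    linear_combination α * h6 - lam * h1
  have hp4 : μ * (α + β + μ) * π 4 = γ * (β + μ) * π 6 := by
    linear_combination -(β + μ) * h4 - β * h5
  have hp5 : μ * (α + β + μ) * π 5 = α * γ * π 6 := by
    linear_combination -α * h4 - (μ + α) * h5
  have hp2 : μ * lam * (β + μ + lam) * (α + β + μ) * π 2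
      = α * γ * ((μ + lam) * (α + β + μ) + lam * (β + μ + lam)) * π 6 := by
    linear_combination (-(lam * (β + μ + lam) * (α + β + μ))) * (h2 + h3)
      + (μ + lam) * (α + β + μ) * (α * h6 - lam * h1)
      + lam * (β + μ + lam) * (-α * h4 - (μ + α) * h5)
  have hp3 : β * (μ * lam * (β + μ + lam) * (α + β + μ)) * π 3
      = (μ + α) * (α * γ * ((μ + lam) * (α + β + μ) + lam * (β + μ + lam))) * π 6 := by
    linear_combination (μ * lam * (β + μ + lam) * (α + β + μ)) * h2
      + (μ + α) * ((-(lam * (β + μ + lam) * (α + β + μ))) * (h2 + h3)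
      + (μ + lam) * (α + β + μ) * (α * h6 - lam * h1)
      + lam * (β + μ + lam) * (-α * h4 - (μ + α) * h5))
  -- division forms
  have hd1 : (0:ℝ) < lam * (β + μ + lam) := by positivity
  have hd2 : (0:ℝ) < μ * (α + β + μ) := by positivity
  have hd3 : (0:ℝ) < μ * lam * (β + μ + lam) * (α + β + μ) := by positivity
  have hq0 : π 0 = γ * π 6 / lam := by field_simp; linear_combination hp0
  have hq1 : π 1 = α * γ * π 6 / (lam * (β + μ + lam)) := by
    field_simp; linear_combination hp1
  have hq4 : π 4 = γ * (β + μ) * π 6 / (μ * (α + β + μ)) := by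
    field_simp; linear_combination hp4
  have hq5 : π 5 = α * γ * π 6 / (μ * (α + β + μ)) := by
    field_simp; linear_combination hp5
  have hq2 : π 2 = α * γ * ((μ + lam) * (α + β + μ) + lam * (β + μ + lam)) * π 6
      / (μ * lam * (β + μ + lam) * (α + β + μ)) := by
    field_simp; linear_combination hp2
  have hq3 : π 3 = (μ + α) * (α * γ * ((μ + lam) * (α + β + μ) + lam * (β + μ + lam))) * π 6
      / (β * (μ * lam * (β + μ + lam) * (α + β + μ))) := by
    field_simp; linear_combination hp3
  -- π 6 is positive
  have hsum := hπsum
  simp only [Fin.sum_univ_seven] at hsum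
  have h6pos : 0 < π 6 := by
    rcases (hπnn 6).lt_or_eq with h | h
    · exact h
    · exfalso
      rw [← h] at hq0 hq1 hq2 hq3 hq4 hq5
      simp at hq0 hq1 hq2 hq3 hq4 hq5
      rw [hq0, hq1, hq2, hq3, hq4, hq5, ← h] at hsum
      norm_num at hsum
  have dL : 0 < π 4 + π 2 + π 5 + π 3 + π 6 := by
    have := hπnn 2; have := hπnn 3; have := hπnn 4; have := hπnn 5
    linarith
  have dR : (0:ℝ) < (α * γ + lam * β) * μ ^ 2 +
      (lam * β * (lam + β) + γ * (lam * β + lam * α + α * (lam + α + β))) * μ +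
      γ * lam * (β + α) * (lam + α + β) := by positivity
  rw [div_eq_div_iff dL.ne' dR.ne', hq2, hq3, hq4, hq5]
  field_simp
  ring
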